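/- Let (S_k)_{k≥1} be a random walk with i.i.d. increments of mean μ ∈ ℝ and finite second moment, and let L > 0. Then Σ_{k=1}^∞ P(S_k > (L + μ)k) < ∞. -/

import Mathlib

open MeasureTheory ProbabilityTheory Filter Finset
open scoped ENNReal NNReal

lemma exp_le_quadratic (x : ℝ) : Real.exp x ≤ 1 + x + x ^ 2 * Real.exp |x| := by
  rcases le_or_gt 0 x with hx | hx
  · rw [abs_of_nonneg hx]
    nlinarith [Real.add_one_le_exp (-x), Real.exp_pos x, Real.exp_neg x,
      mul_pos (Real.exp_pos x) (Real.exp_pos (-x)),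
      mul_le_mul_of_nonneg_left (Real.add_one_le_exp (-x)) (Real.exp_pos x).le,
      Real.exp_neg x ▸ mul_inv_cancel₀ (Real.exp_pos x).ne']
  · rw [abs_of_neg hx]
    have h1 : 1 - x ≤ Real.exp (-x) := by nlinarith [Real.add_one_le_exp (-x)]
    have h2 : Real.exp x * Real.exp (-x) = 1 := by rw [← Real.exp_add]; simp
    have h3 : (0:ℝ) < Real.exp x := Real.exp_pos x
    have h4 : (1:ℝ) ≤ Real.exp (-x) := by rw [Real.one_le_exp_iff]; linarith
    have h5 : (0:ℝ) < 1 - x := by linarith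
    have hA : Real.exp x * (1 - x) ≤ 1 := by
      calc Real.exp x * (1 - x) ≤ Real.exp x * Real.exp (-x) :=
            mul_le_mul_of_nonneg_left h1 h3.le
        _ = 1 := h2
    have hx3 : x ^ 3 ≤ 0 := by nlinarith [sq_nonneg x]
    have key : Real.exp x ≤ 1 + x + x ^ 2 := by nlinarith [hA, hx3, h5]
    nlinarith [mul_nonneg (sq_nonneg x) (by linarith : (0:ℝ) ≤ Real.exp (-x) - 1)]
lemma integrable_of_bdd {Ω : Type*} [MeasurableSpace Ω] {P : Measure Ω} [IsProbabilityMeasure P]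
    {f : Ω → ℝ} (hf : Measurable f) {C : ℝ} (hC : ∀ ω, |f ω| ≤ C) : Integrable f P :=
  Integrable.mono' (integrable_const C) hf.aestronglyMeasurable (ae_of_all _ hC)

lemma mgf_le_of_bdd {Ω : Type*} [MeasurableSpace Ω] (P : Measure Ω) [IsProbabilityMeasure P]
    {W : Ω → ℝ} (hW : Measurable W) {M : ℝ} (hbdd : ∀ ω, |W ω| ≤ M)
    (hmean : ∫ ω, W ω ∂P = 0) {t : ℝ} (ht : 0 ≤ t) :
    mgf W P t ≤ Real.exp (t ^ 2 * (∫ ω, (W ω) ^ 2 ∂P) * Real.exp (t * M)) := by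
  have hptw : ∀ ω, Real.exp (t * W ω) ≤ 1 + t * W ω + (t ^ 2 * Real.exp (t * M)) * (W ω) ^ 2 := by
    intro ω
    have h1 := exp_le_quadratic (t * W ω)
    have h2 : Real.exp |t * W ω| ≤ Real.exp (t * M) := by
      apply Real.exp_le_exp.2
      rw [abs_mul, abs_of_nonneg ht]
      exact mul_le_mul_of_nonneg_left (hbdd ω) ht
    nlinarith [sq_nonneg (t * W ω), mul_pow t (W ω) 2]
  have hintW : Integrable W P := integrable_of_bdd hW hbdd
  have hintW2 : Integrable (fun ω => (W ω) ^ 2) P := by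
    refine integrable_of_bdd (hW.pow_const 2) (C := M ^ 2) fun ω => ?_
    rw [abs_pow, ← sq_abs M]
    exact pow_le_pow_left₀ (abs_nonneg _) ((hbdd ω).trans (le_abs_self M)) 2
  have hintE : Integrable (fun ω => Real.exp (t * W ω)) P := by
    refine integrable_of_bdd (hW.const_mul t).exp (C := Real.exp (t * M)) fun ω => ?_
    rw [abs_of_pos (Real.exp_pos _)]
    exact Real.exp_le_exp.2 (le_trans (le_abs_self _) (by
      rw [abs_mul, abs_of_nonneg ht]
      exact mul_le_mul_of_nonneg_left (hbdd ω) ht))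
  have hint : ∫ ω, Real.exp (t * W ω) ∂P
      ≤ ∫ ω, (1 + t * W ω + (t ^ 2 * Real.exp (t * M)) * (W ω) ^ 2) ∂P := by
    refine integral_mono hintE ?_ hptw
    exact ((integrable_const 1).add (hintW.const_mul t)).add (hintW2.const_mul _)
  have heq : ∫ ω, (1 + t * W ω + (t ^ 2 * Real.exp (t * M)) * (W ω) ^ 2) ∂P
      = 1 + (t ^ 2 * Real.exp (t * M)) * ∫ ω, (W ω) ^ 2 ∂P := by
    have e1 : ∫ ω, (1 + t * W ω + (t ^ 2 * Real.exp (t * M)) * (W ω) ^ 2) ∂P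
        = (∫ ω, (1 + t * W ω) ∂P) + ∫ ω, (t ^ 2 * Real.exp (t * M)) * (W ω) ^ 2 ∂P :=
      integral_add ((integrable_const 1).add (hintW.const_mul t)) (hintW2.const_mul _)
    have e2 : ∫ ω, (1 + t * W ω) ∂P = (∫ ω, (1:ℝ) ∂P) + ∫ ω, t * W ω ∂P :=
      integral_add (integrable_const 1) (hintW.const_mul t)
    rw [e1, e2, integral_const_mul, integral_const_mul, hmean, integral_const]
    simp
  have hvar : 0 ≤ ∫ ω, (W ω) ^ 2 ∂P := integral_nonneg fun ω => sq_nonneg _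
  have hfin := Real.add_one_le_exp (t ^ 2 * (∫ ω, (W ω) ^ 2 ∂P) * Real.exp (t * M))
  unfold mgf
  nlinarith [hint, heq]
lemma chernoff_iid {Ω : Type*} [MeasurableSpace Ω] (P : Measure Ω) [IsProbabilityMeasure P]
    (W : ℕ → Ω → ℝ) (hmeas : ∀ i, Measurable (W i))
    (hindep : iIndepFun W P)
    (hident : ∀ i, IdentDistrib (W i) (W 0) P P)
    {M : ℝ} (hbdd : ∀ i ω, |W i ω| ≤ M)
    (hmean : ∫ ω, W 0 ω ∂P = 0) (n : ℕ) {t : ℝ} (ht : 0 ≤ t) (a : ℝ) :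
    (P {ω | a ≤ ∑ i ∈ range n, W i ω}).toReal
      ≤ Real.exp (-t * a + n * (t ^ 2 * (∫ ω, (W 0 ω) ^ 2 ∂P) * Real.exp (t * M))) := by
  have hS : Measurable (fun ω => ∑ i ∈ range n, W i ω) := by
    exact Finset.measurable_sum _ fun i _ => hmeas i
  have hintE : Integrable (fun ω => Real.exp (t * ∑ i ∈ range n, W i ω)) P := by
    refine integrable_of_bdd (hS.const_mul t).exp (C := Real.exp (t * (n * M))) fun ω => ?_
    rw [abs_of_pos (Real.exp_pos _)]
    refine Real.exp_le_exp.2 (mul_le_mul_of_nonneg_left ?_ ht)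
    calc ∑ i ∈ range n, W i ω ≤ ∑ i ∈ range n, M :=
          Finset.sum_le_sum fun i _ => (abs_le.1 (hbdd i ω)).2
      _ = n * M := by simp [mul_comm]
  have key := measure_ge_le_exp_mul_mgf (μ := P) (X := fun ω => ∑ i ∈ range n, W i ω) a ht hintE
  have hmgf_eq : ∀ i, mgf (W i) P t = mgf (W 0) P t := fun i =>
    ((hident i).comp (Real.measurable_exp.comp (measurable_const.mul measurable_id))).integral_eq
  have hsum : mgf (fun ω => ∑ i ∈ range n, W i ω) P t = (mgf (W 0) P t) ^ n := by
    have h0 : (fun ω => ∑ i ∈ range n, W i ω) = ∑ i ∈ range n, W i := by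
      ext ω; simp
    rw [h0, hindep.mgf_sum hmeas]
    rw [Finset.prod_congr rfl fun i _ => hmgf_eq i, Finset.prod_const, card_range]
  have hmgf0 : mgf (W 0) P t ≤ Real.exp (t ^ 2 * (∫ ω, (W 0 ω) ^ 2 ∂P) * Real.exp (t * M)) :=
    mgf_le_of_bdd P (hmeas 0) (hbdd 0) hmean ht
  calc (P {ω | a ≤ ∑ i ∈ range n, W i ω}).toReal
      ≤ Real.exp (-t * a) * mgf (fun ω => ∑ i ∈ range n, W i ω) P t := key
    _ ≤ Real.exp (-t * a) * Real.exp (t ^ 2 * (∫ ω, (W 0 ω) ^ 2 ∂P) * Real.exp (t * M)) ^ n := by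
        rw [hsum]
        exact mul_le_mul_of_nonneg_left (pow_le_pow_left₀ (mgf_nonneg) hmgf0 n)
          (Real.exp_pos _).le
    _ = Real.exp (-t * a + n * (t ^ 2 * (∫ ω, (W 0 ω) ^ 2 ∂P) * Real.exp (t * M))) := by
        rw [← Real.exp_nat_mul, ← Real.exp_add]
lemma tail_sum_ne_top {Ω : Type*} [MeasurableSpace Ω] (P : Measure Ω) [IsProbabilityMeasure P]
    {Y : Ω → ℝ} (hY : Measurable Y) (hY2 : Integrable (fun ω => (Y ω) ^ 2) P)
    {ε : ℝ} (hε : 0 < ε) :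
    ∑' k : ℕ, ((k : ℝ≥0∞) + 1) * P {ω | ε * (k + 1) < |Y ω|} ≠ ⊤ := by
  have hmeas : ∀ k : ℕ, MeasurableSet {ω | ε * (k + 1) < |Y ω|} := fun k =>
    measurableSet_lt measurable_const hY.abs
  have h1 : ∀ k : ℕ, ((k : ℝ≥0∞) + 1) * P {ω | ε * (k + 1) < |Y ω|}
      = ∫⁻ ω, Set.indicator {ω | ε * (k + 1) < |Y ω|} (fun _ => (k : ℝ≥0∞) + 1) ω ∂P := by
    intro k
    rw [lintegral_indicator_const (hmeas k)]
  rw [tsum_congr h1, ← lintegral_tsum (fun k => ((measurable_const).indicator (hmeas k)).aemeasurable)]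
  have hptw : ∀ ω, (∑' k : ℕ, Set.indicator {ω | ε * (k + 1) < |Y ω|} (fun _ => (k : ℝ≥0∞) + 1) ω)
      ≤ ENNReal.ofReal ((|Y ω| / ε) ^ 2) := by
    intro ω
    set c : ℝ := |Y ω| / ε with hc
    have hc0 : 0 ≤ c := div_nonneg (abs_nonneg _) hε.le
    set N : ℕ := Nat.floor c with hN
    have hvanish : ∀ k : ℕ, k ∉ Finset.range N →
        Set.indicator {ω | ε * (k + 1) < |Y ω|} (fun _ => (k : ℝ≥0∞) + 1) ω = 0 := by
      intro k hk
      rw [Finset.mem_range, not_lt] at hk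
      apply Set.indicator_of_notMem
      intro hmem
      simp only [Set.mem_setOf_eq] at hmem
      have h2 : c < N + 1 := Nat.lt_floor_add_one c
      have h3 : (k : ℝ) + 1 < c := by
        rw [hc, lt_div_iff₀ hε]
        linarith [hmem]
      have : (N : ℝ) ≤ k := Nat.cast_le.2 hk
      linarith
    rw [tsum_eq_sum hvanish]
    calc ∑ k ∈ Finset.range N, Set.indicator {ω | ε * (k + 1) < |Y ω|} (fun _ => (k : ℝ≥0∞) + 1) ω
        ≤ ∑ _k ∈ Finset.range N, (N : ℝ≥0∞) := by
          refine Finset.sum_le_sum fun k hk => ?_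
          refine le_trans (Set.indicator_le_self _ _ ω) ?_
          rw [Finset.mem_range] at hk
          have : (k : ℝ≥0∞) + 1 = ((k + 1 : ℕ) : ℝ≥0∞) := by push_cast; ring
          rw [this]
          exact_mod_cast Nat.cast_le.2 hk
      _ = (N : ℝ≥0∞) * N := by rw [Finset.sum_const, Finset.card_range]; ring
      _ ≤ ENNReal.ofReal c * ENNReal.ofReal c := by
          have : (N : ℝ≥0∞) ≤ ENNReal.ofReal c := by
            rw [← ENNReal.ofReal_natCast]
            exact ENNReal.ofReal_le_ofReal (Nat.floor_le hc0)
          exact mul_le_mul' this this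
      _ = ENNReal.ofReal (c ^ 2) := by rw [← ENNReal.ofReal_mul (hc0), sq]
  refine ne_top_of_le_ne_top ?_ (lintegral_mono hptw)
  have : ∀ ω, ENNReal.ofReal ((|Y ω| / ε) ^ 2) = ENNReal.ofReal (ε⁻¹ ^ 2) * ENNReal.ofReal ((Y ω) ^ 2) := by
    intro ω
    rw [← ENNReal.ofReal_mul (by positivity)]
    congr 1
    rw [div_pow, sq_abs]
    field_simp
  rw [funext this] at *
  rw [lintegral_const_mul _ (by fun_prop)]
  refine ENNReal.mul_ne_top ENNReal.ofReal_ne_top ?_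
  have := hY2.2
  rw [hasFiniteIntegral_iff_norm] at this
  refine ne_top_of_le_ne_top this.ne (lintegral_mono fun ω => ?_)
  apply ENNReal.ofReal_le_ofReal
  exact le_abs_self _
set_option maxHeartbeats 1000000 in
/-- Hsu–Robbins: for an i.i.d. random walk with mean `μ` and finite second
moment, the probabilities of exceeding a line of slope `L + μ` with `L > 0`
are summable. -/
theorem stmt_4 {Ω : Type*} [MeasurableSpace Ω] (P : Measure Ω) [IsProbabilityMeasure P]
    (X : ℕ → Ω → ℝ) (hmeas : ∀ i, Measurable (X i))
    (hindep : iIndepFun X P)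
    (hident : ∀ i, IdentDistrib (X i) (X 0) P P)
    (hint : Integrable (X 0) P) (μ : ℝ) (hmean : P[X 0] = μ)
    (hmom2 : Integrable (fun ω => (X 0 ω) ^ 2) P)
    (L : ℝ) (hL : 0 < L) :
    (∑' k : ℕ, P {ω | (L + μ) * (k + 1 : ℕ) < ∑ i ∈ Finset.range (k + 1), X i ω}) ≠ ⊤ := by
  classical
  -- centered increments
  set Y : ℕ → Ω → ℝ := fun i ω => X i ω - μ with hYdef
  have hYmeas : ∀ i, Measurable (Y i) := fun i => (hmeas i).sub measurable_const
  have hYident : ∀ i, IdentDistrib (Y i) (Y 0) P P := fun i =>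
    (hident i).comp (measurable_id.sub measurable_const)
  have hYint : Integrable (Y 0) P := hint.sub (integrable_const μ)
  have hYmean : ∫ ω, Y 0 ω ∂P = 0 := by
    show ∫ ω, (X 0 ω - μ) ∂P = 0
    rw [integral_sub hint (integrable_const μ), integral_const]
    simp only [probReal_univ, one_smul]
    rw [show ∫ ω, X 0 ω ∂P = μ from hmean]; ring
  have hY2 : Integrable (fun ω => (Y 0 ω) ^ 2) P := by
    have heq : (fun ω => (Y 0 ω) ^ 2) = fun ω => ((X 0 ω) ^ 2 - (2 * μ) * X 0 ω) + μ ^ 2 := by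
      funext ω; show (X 0 ω - μ) ^ 2 = _; ring
    rw [heq]
    exact (hmom2.sub (hint.const_mul (2 * μ))).add (integrable_const _)
  set V : ℝ := ∫ ω, (Y 0 ω) ^ 2 ∂P with hVdef
  have hV0 : 0 ≤ V := integral_nonneg fun ω => sq_nonneg _
  set ε : ℝ := L / 24 with hεdef
  have hε0 : 0 < ε := by rw [hεdef]; linarith
  -- truncation
  set g : ℕ → ℝ → ℝ := fun n x => if |x| ≤ ε * n then x else 0 with hgdef
  have hgmeas : ∀ n, Measurable (g n) := fun n =>
    Measurable.ite (measurableSet_le measurable_abs measurable_const) measurable_id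
      measurable_const
  have hgbdd : ∀ n x, |g n x| ≤ ε * n := by
    intro n x
    by_cases h : |x| ≤ ε * n
    · simpa [hgdef, h] using h
    · simp only [hgdef, h, if_false, abs_zero]
      positivity
  have hgsq : ∀ n x, (g n x) ^ 2 ≤ x ^ 2 := by
    intro n x
    by_cases h : |x| ≤ ε * n
    · simp [hgdef, h]
    · simp only [hgdef, h, if_false]
      simpa using sq_nonneg x
  have hZint : ∀ n i, Integrable (fun ω => g n (Y i ω)) P := fun n i =>
    integrable_of_bdd ((hgmeas n).comp (hYmeas i)) (fun ω => hgbdd n _)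
  set m : ℕ → ℝ := fun n => ∫ ω, g n (Y 0 ω) ∂P with hmdef
  set W : ℕ → ℕ → Ω → ℝ := fun n i ω => g n (Y i ω) - m n with hWdef
  have hWmeas : ∀ n i, Measurable (W n i) := fun n i =>
    ((hgmeas n).comp (hYmeas i)).sub measurable_const
  have hWindep : ∀ n, iIndepFun (W n) P := fun n =>
    hindep.comp (fun _ x => g n (x - μ) - m n)
      (fun _ => ((hgmeas n).comp (measurable_id.sub measurable_const)).sub measurable_const)
  have hWident : ∀ n i, IdentDistrib (W n i) (W n 0) P P := fun n i =>
    (hYident i).comp ((hgmeas n).sub measurable_const)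
  have hWmean : ∀ n, ∫ ω, W n 0 ω ∂P = 0 := by
    intro n
    show ∫ ω, (g n (Y 0 ω) - m n) ∂P = 0
    rw [integral_sub (hZint n 0) (integrable_const _), integral_const]
    simp only [probReal_univ, one_smul]
    exact sub_self _
  have hm_bdd : ∀ n, |m n| ≤ ε * n := by
    intro n
    have h1 : |m n| ≤ ∫ ω, |g n (Y 0 ω)| ∂P := by
      rw [hmdef]
      simpa [Real.norm_eq_abs] using
        norm_integral_le_integral_norm (μ := P) (f := fun ω => g n (Y 0 ω))
    refine h1.trans ?_
    calc ∫ ω, |g n (Y 0 ω)| ∂P ≤ ∫ _ω, (ε * n : ℝ) ∂P :=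
          integral_mono (hZint n 0).abs (integrable_const _) (fun ω => hgbdd n _)
      _ = ε * n := by simp
  have hWbdd : ∀ n i ω, |W n i ω| ≤ 2 * (ε * n) := by
    intro n i ω
    have h1 : |W n i ω| ≤ |g n (Y i ω)| + |m n| := abs_sub _ _
    have := hgbdd n (Y i ω)
    have := hm_bdd n
    linarith
  have hm_fine : ∀ n : ℕ, 0 < n → |m n| ≤ V / (ε * n) := by
    intro n hn
    have hεn : (0:ℝ) < ε * n := by positivity
    set d : Ω → ℝ := fun ω => Y 0 ω - g n (Y 0 ω) with hddef
    have hd_int : Integrable d P := hYint.sub (hZint n 0)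
    have h1 : m n = -∫ ω, d ω ∂P := by
      rw [hddef]
      rw [integral_sub hYint (hZint n 0), hYmean, hmdef]
      ring
    have h2 : ∀ ω, |d ω| ≤ (Y 0 ω) ^ 2 / (ε * n) := by
      intro ω
      rw [hddef]
      by_cases h : |Y 0 ω| ≤ ε * n
      · simp only [hgdef, h, if_true, sub_self, abs_zero]
        positivity
      · simp only [hgdef, h, if_false, sub_zero]
        push_neg at h
        rw [le_div_iff₀ hεn]
        nlinarith [abs_nonneg (Y 0 ω), sq_abs (Y 0 ω)]
    have h3 : |m n| ≤ ∫ ω, |d ω| ∂P := by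
      rw [h1, abs_neg]
      simpa [Real.norm_eq_abs] using norm_integral_le_integral_norm (μ := P) (f := d)
    refine h3.trans ?_
    calc ∫ ω, |d ω| ∂P ≤ ∫ ω, (Y 0 ω) ^ 2 / (ε * n) ∂P :=
          integral_mono hd_int.abs (hY2.div_const _) h2
      _ = V / (ε * n) := by rw [integral_div, hVdef]
  set C : ℝ := 2 * V + 2 * (V / ε) ^ 2 with hCdef
  have hC0 : 0 ≤ C := by positivity
  have hvar : ∀ n : ℕ, 0 < n → ∫ ω, (W n 0 ω) ^ 2 ∂P ≤ C := by
    intro n hn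
    have hW2int : Integrable (fun ω => (W n 0 ω) ^ 2) P := by
      refine integrable_of_bdd ((hWmeas n 0).pow_const 2) (C := (2 * (ε * n)) ^ 2) fun ω => ?_
      rw [abs_pow, ← sq_abs (2 * (ε * n))]
      exact pow_le_pow_left₀ (abs_nonneg _) ((hWbdd n 0 ω).trans (le_abs_self _)) 2
    have hZ2int : Integrable (fun ω => (g n (Y 0 ω)) ^ 2) P := by
      refine integrable_of_bdd (((hgmeas n).comp (hYmeas 0)).pow_const 2)
        (C := (ε * n) ^ 2) fun ω => ?_
      rw [abs_pow, ← sq_abs (ε * n)]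
      exact pow_le_pow_left₀ (abs_nonneg _) ((hgbdd n _).trans (le_abs_self _)) 2
    have step1 : ∫ ω, (W n 0 ω) ^ 2 ∂P
        ≤ ∫ ω, (2 * (g n (Y 0 ω)) ^ 2 + 2 * (m n) ^ 2) ∂P := by
      refine integral_mono hW2int ((hZ2int.const_mul 2).add (integrable_const _)) fun ω => ?_
      show (g n (Y 0 ω) - m n) ^ 2 ≤ _
      nlinarith [sq_nonneg (g n (Y 0 ω) + m n)]
    have step2 : ∫ ω, (2 * (g n (Y 0 ω)) ^ 2 + 2 * (m n) ^ 2) ∂P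
        = 2 * (∫ ω, (g n (Y 0 ω)) ^ 2 ∂P) + 2 * (m n) ^ 2 := by
      rw [integral_add (hZ2int.const_mul 2) (integrable_const _), integral_const_mul,
        integral_const]
      simp
    have step3 : ∫ ω, (g n (Y 0 ω)) ^ 2 ∂P ≤ V :=
      integral_mono hZ2int hY2 fun ω => hgsq n _
    have step4 : (m n) ^ 2 ≤ (V / ε) ^ 2 := by
      have h5 : |m n| ≤ V / ε := by
        refine (hm_fine n hn).trans ?_
        apply div_le_div_of_nonneg_left hV0 hε0
        have h6 : (1:ℝ) ≤ (n:ℝ) := by exact_mod_cast hn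
        nlinarith [h6, hε0]
      nlinarith [abs_nonneg (m n), sq_abs (m n)]
    rw [hCdef]; linarith
  -- the asymptotic threshold
  set D : ℝ := 36 * C / L ^ 2 with hDdef
  have hD0 : 0 ≤ D := by positivity
  obtain ⟨N, hN2, hNprop⟩ :
      ∃ N : ℕ, 2 ≤ N ∧ ∀ n : ℕ, N ≤ n →
        2 * (V / ε) ≤ L * n ∧ D * Real.log n ≤ Real.sqrt n := by
    have h1 : ∀ᶠ n : ℕ in atTop, 2 * (V / ε) ≤ L * n := by
      filter_upwards [tendsto_natCast_atTop_atTop.eventually_ge_atTop ((2 * (V / ε)) / L)]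
        with n hn
      rw [div_le_iff₀ hL] at hn
      linarith
    have h2 : ∀ᶠ n : ℕ in atTop, D * Real.log n ≤ Real.sqrt n := by
      have ho := isLittleO_log_rpow_atTop (r := 1 / 2) (by norm_num)
      have hb := ho.def (c := 1 / (D + 1)) (by positivity)
      filter_upwards [tendsto_natCast_atTop_atTop.eventually hb,
        tendsto_natCast_atTop_atTop.eventually_ge_atTop (1 : ℝ)] with n hn hn1
      rw [Real.norm_eq_abs, Real.norm_eq_abs,
        abs_of_nonneg (Real.log_nonneg hn1),
        abs_of_nonneg (by positivity : (0:ℝ) ≤ (n:ℝ) ^ ((1:ℝ) / 2))] at hn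
      have hrw : Real.sqrt (n : ℝ) = (n : ℝ) ^ ((1:ℝ) / 2) := Real.sqrt_eq_rpow _
      rw [hrw]
      have hnn : (0:ℝ) ≤ (n:ℝ) ^ ((1:ℝ)/2) := by positivity
      calc D * Real.log n ≤ D * (1 / (D + 1) * (n:ℝ) ^ ((1:ℝ)/2)) :=
            mul_le_mul_of_nonneg_left hn hD0
        _ = (D / (D + 1)) * (n:ℝ) ^ ((1:ℝ)/2) := by ring
        _ ≤ 1 * (n:ℝ) ^ ((1:ℝ)/2) := by
            refine mul_le_mul_of_nonneg_right ?_ hnn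
            rw [div_le_one (by positivity)]; linarith
        _ = (n:ℝ) ^ ((1:ℝ)/2) := one_mul _
    obtain ⟨N0, hN0⟩ := eventually_atTop.1 (h1.and h2)
    exact ⟨max N0 2, le_max_right _ _,
      fun n hn => hN0 n (le_trans (le_max_left _ _) hn)⟩
  -- the dominating sequences
  set F : ℕ → ℝ≥0∞ := fun k => ((k : ℝ≥0∞) + 1) * P {ω | ε * ((k : ℝ) + 1) < |Y 0 ω|}
    with hFdef
  set G : ℕ → ℝ≥0∞ := fun k =>
    if k + 1 < N then 1 else ENNReal.ofReal (((k + 1 : ℕ) : ℝ) ^ (-2 : ℝ)) with hGdef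
  have hmain : ∀ k : ℕ,
      P {ω | (L + μ) * (k + 1 : ℕ) < ∑ i ∈ Finset.range (k + 1), X i ω} ≤ F k + G k := by
    intro k
    by_cases hk : k + 1 < N
    · refine le_trans prob_le_one ?_
      have hGk : G k = 1 := by rw [hGdef]; simp only [if_pos hk]
      rw [hGk]
      exact le_add_self
    · push_neg at hk
      obtain ⟨hc1, hc2⟩ := hNprop (k + 1) hk
      have hn2 : (2:ℝ) ≤ ((k + 1 : ℕ) : ℝ) := by exact_mod_cast hN2.trans hk
      set n : ℕ := k + 1 with hndef
      have hnpos : 0 < n := Nat.succ_pos k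
      have hn0 : (0:ℝ) < (n:ℝ) := by linarith
      have hn1 : (1:ℝ) < (n:ℝ) := by linarith
      -- rewrite the event in terms of the centered walk
      have hEeq : {ω | (L + μ) * (n : ℕ) < ∑ i ∈ Finset.range n, X i ω}
          = {ω | L * (n:ℝ) < ∑ i ∈ Finset.range n, Y i ω} := by
        ext ω
        simp only [Set.mem_setOf_eq]
        have hsum : ∑ i ∈ Finset.range n, Y i ω
            = (∑ i ∈ Finset.range n, X i ω) - n * μ := by
          show ∑ i ∈ Finset.range n, (X i ω - μ) = _
          rw [Finset.sum_sub_distrib, Finset.sum_const, Finset.card_range, nsmul_eq_mul]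
        constructor <;> intro h <;> · rw [hsum] at *; linarith
      rw [hEeq]
      set A : Set Ω := ⋃ i ∈ Finset.range n, {ω | ε * (n:ℝ) < |Y i ω|} with hAdef
      set B : Set Ω := {ω | L * (n:ℝ) / 2 ≤ ∑ i ∈ Finset.range n, W n i ω} with hBdef
      have hsub : {ω | L * (n:ℝ) < ∑ i ∈ Finset.range n, Y i ω} ⊆ A ∪ B := by
        intro ω hω
        simp only [Set.mem_setOf_eq] at hω
        by_cases hA : ω ∈ A
        · exact Or.inl hA
        · refine Or.inr ?_
          rw [hAdef] at hA
          simp only [Set.mem_iUnion, Set.mem_setOf_eq, not_exists] at hA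
          have hg_eq : ∀ i ∈ Finset.range n, g n (Y i ω) = Y i ω := by
            intro i hi
            exact if_pos (not_lt.1 (hA i hi))
          have hsumW : ∑ i ∈ Finset.range n, W n i ω
              = (∑ i ∈ Finset.range n, Y i ω) - n * m n := by
            show ∑ i ∈ Finset.range n, (g n (Y i ω) - m n) = _
            rw [Finset.sum_sub_distrib, Finset.sum_const, Finset.card_range, nsmul_eq_mul,
              Finset.sum_congr rfl hg_eq]
          have hnm : (n:ℝ) * m n ≤ V / ε := by
            have h7 : (n:ℝ) * m n ≤ (n:ℝ) * |m n| :=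
              mul_le_mul_of_nonneg_left (le_abs_self _) hn0.le
            have h8 := hm_fine n hnpos
            have h9 : (n:ℝ) * (V / (ε * n)) = V / ε := by field_simp
            nlinarith [h7, h8, h9, hn0]
          show L * (n:ℝ) / 2 ≤ ∑ i ∈ Finset.range n, W n i ω
          rw [hsumW]
          linarith [hc1]
      refine le_trans (measure_mono hsub) (le_trans (measure_union_le A B) ?_)
      have hPA : P A ≤ F k := by
        rw [hAdef]
        refine le_trans (measure_biUnion_finset_le _ _) ?_
        have hmapeq : ∀ i, P {ω | ε * (n:ℝ) < |Y i ω|} = P {ω | ε * (n:ℝ) < |Y 0 ω|} := by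
          intro i
          have hms : MeasurableSet {x : ℝ | ε * (n:ℝ) < |x|} :=
            measurableSet_lt measurable_const measurable_abs
          calc P {ω | ε * (n:ℝ) < |Y i ω|}
              = Measure.map (Y i) P {x | ε * (n:ℝ) < |x|} :=
                (Measure.map_apply (hYmeas i) hms).symm
            _ = Measure.map (Y 0) P {x | ε * (n:ℝ) < |x|} := by rw [(hYident i).map_eq]
            _ = P {ω | ε * (n:ℝ) < |Y 0 ω|} := Measure.map_apply (hYmeas 0) hms
        rw [Finset.sum_congr rfl (fun i _ => hmapeq i), Finset.sum_const, Finset.card_range]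
        rw [hFdef]
        simp only [nsmul_eq_mul]
        have hcE : ((n:ℕ) : ℝ≥0∞) = (k : ℝ≥0∞) + 1 := by rw [hndef]; push_cast; ring
        have hcR : ((n:ℕ) : ℝ) = (k : ℝ) + 1 := by rw [hndef]; push_cast; ring
        rw [hcE, hcR]
      have hPB : P B ≤ G k := by
        have hσ0 : 0 ≤ ∫ ω, (W n 0 ω) ^ 2 ∂P := integral_nonneg fun ω => sq_nonneg _
        have hσC := hvar n hnpos
        set lg : ℝ := Real.log (n:ℝ) with hlgdef
        have hlg0 : 0 < lg := Real.log_pos hn1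
        set tn : ℝ := 6 * lg / (L * (n:ℝ)) with htndef
        have htn0 : 0 ≤ tn := by
          rw [htndef]
          exact (div_pos (by linarith) (mul_pos hL hn0)).le
        have hcher := chernoff_iid P (W n) (hWmeas n) (hWindep n) (hWident n)
          (hWbdd n) (hWmean n) n htn0 (L * (n:ℝ) / 2)
        have hLne : L ≠ 0 := hL.ne'
        have hnne : (n:ℝ) ≠ 0 := hn0.ne'
        have ha0 : tn * (L * (n:ℝ) / 2) = 3 * lg := by
          rw [htndef]; field_simp; ring
        have hb0 : tn * (2 * (ε * (n:ℝ))) = lg / 2 := by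
          rw [htndef, hεdef]; field_simp; ring
        have hsq : Real.exp (lg / 2) = Real.sqrt (n:ℝ) := by
          rw [hlgdef, ← Real.log_sqrt hn0.le, Real.exp_log (Real.sqrt_pos.2 hn0)]
        have hss : Real.sqrt (n:ℝ) * Real.sqrt (n:ℝ) = (n:ℝ) := Real.mul_self_sqrt hn0.le
        have hspos : 0 < Real.sqrt (n:ℝ) := Real.sqrt_pos.2 hn0
        have hkey : (n:ℝ) * (tn ^ 2 * (∫ ω, (W n 0 ω) ^ 2 ∂P)
            * Real.exp (tn * (2 * (ε * (n:ℝ))))) ≤ lg := by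
          rw [hb0, hsq]
          set σ2 : ℝ := ∫ ω, (W n 0 ω) ^ 2 ∂P with hσ2def
          have h1 : (n:ℝ) * (tn ^ 2 * σ2 * Real.sqrt (n:ℝ))
              = 36 * σ2 * lg ^ 2 * Real.sqrt (n:ℝ) / (L ^ 2 * (n:ℝ)) := by
            rw [htndef]; field_simp; ring
          rw [h1]
          have h2 : 36 * σ2 * lg ^ 2 * Real.sqrt (n:ℝ) / (L ^ 2 * (n:ℝ))
              ≤ 36 * C * lg ^ 2 * Real.sqrt (n:ℝ) / (L ^ 2 * (n:ℝ)) := by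
            gcongr
          refine h2.trans ?_
          have hc2' : 36 * C * lg ≤ L ^ 2 * Real.sqrt (n:ℝ) := by
            have h36 := mul_le_mul_of_nonneg_left hc2
              (le_of_lt (by positivity : (0:ℝ) < L ^ 2))
            rw [hDdef] at h36
            calc 36 * C * lg = L ^ 2 * (36 * C / L ^ 2 * lg) := by field_simp
              _ ≤ L ^ 2 * Real.sqrt (n:ℝ) := h36
          rw [div_le_iff₀ (by positivity : (0:ℝ) < L ^ 2 * (n:ℝ))]
          calc 36 * C * lg ^ 2 * Real.sqrt (n:ℝ)
              = (36 * C * lg) * (lg * Real.sqrt (n:ℝ)) := by ring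
            _ ≤ (L ^ 2 * Real.sqrt (n:ℝ)) * (lg * Real.sqrt (n:ℝ)) :=
                mul_le_mul_of_nonneg_right hc2' (mul_nonneg hlg0.le hspos.le)
            _ = lg * (L ^ 2 * (Real.sqrt (n:ℝ) * Real.sqrt (n:ℝ))) := by ring
            _ = lg * (L ^ 2 * (n:ℝ)) := by rw [hss]
        have hexp : -tn * (L * (n:ℝ) / 2)
            + (n:ℝ) * (tn ^ 2 * (∫ ω, (W n 0 ω) ^ 2 ∂P)
              * Real.exp (tn * (2 * (ε * (n:ℝ))))) ≤ -(2 * lg) := by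
          rw [neg_mul, ha0]
          linarith [hkey]
        have hBB : P B ≤ ENNReal.ofReal (Real.exp (-(2 * lg))) := by
          rw [hBdef, ← ENNReal.ofReal_toReal (measure_ne_top P _)]
          exact ENNReal.ofReal_le_ofReal (le_trans hcher (Real.exp_le_exp.2 hexp))
        refine hBB.trans ?_
        have hexp2 : Real.exp (-(2 * lg)) = ((n:ℕ):ℝ) ^ (-2:ℝ) := by
          rw [Real.rpow_def_of_pos hn0, ← hlgdef]
          congr 1; ring
        rw [hexp2, hGdef]
        simp only [if_neg (not_lt.2 hk)]
        rw [hndef]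
        rw [if_neg (show ¬ k + 1 < N from not_lt.2 hk)]
      exact add_le_add hPA hPB
  refine ne_top_of_le_ne_top ?_ (ENNReal.tsum_le_tsum hmain)
  rw [ENNReal.tsum_add]
  refine ENNReal.add_ne_top.2 ⟨?_, ?_⟩
  · -- ∑' F ≠ ⊤
    exact tail_sum_ne_top P (hYmeas 0) hY2 hε0
  · -- ∑' G ≠ ⊤
    have hG1 : ∀ k, G k ≤ (if k + 1 < N then (1:ℝ≥0∞) else 0)
        + ENNReal.ofReal (((k + 1 : ℕ) : ℝ) ^ (-2 : ℝ)) := by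
      intro k
      by_cases h : k + 1 < N
      · simp only [hGdef, h, if_true]
        exact le_self_add
      · simp only [hGdef, h, if_false, zero_add, le_refl]
    refine ne_top_of_le_ne_top ?_ (ENNReal.tsum_le_tsum hG1)
    rw [ENNReal.tsum_add]
    refine ENNReal.add_ne_top.2 ⟨?_, ?_⟩
    · have hvanish : ∀ k : ℕ, k ∉ Finset.range N →
          (if k + 1 < N then (1:ℝ≥0∞) else 0) = 0 := by
        intro k hk
        rw [Finset.mem_range, not_lt] at hk
        rw [if_neg (by omega)]
      rw [tsum_eq_sum hvanish]
      have hle : (∑ k ∈ Finset.range N, (if k + 1 < N then (1:ℝ≥0∞) else 0))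
          ≤ ∑ _k ∈ Finset.range N, (1:ℝ≥0∞) :=
        Finset.sum_le_sum fun k _ => by split <;> simp
      refine ne_top_of_le_ne_top ?_ hle
      simp
    · have hsummable : Summable (fun k : ℕ => ((k + 1 : ℕ) : ℝ) ^ (-2 : ℝ)) := by
        have h0 : Summable (fun n : ℕ => (n : ℝ) ^ (-2 : ℝ)) :=
          Real.summable_nat_rpow.2 (by norm_num)
        exact_mod_cast (summable_nat_add_iff (f := fun n : ℕ => (n : ℝ) ^ (-2 : ℝ)) 1).2 h0
      rw [← ENNReal.ofReal_tsum_of_nonneg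
        (fun k => Real.rpow_nonneg (by positivity) _) hsummable]
      exact ENNReal.ofReal_ne_top
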